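/- Let P = Σ_{|ν|≤d} a_ν X^ν be an internal polynomial in n variables over *ℂ (d possibly an infinite hypernatural). If (i) a_ν is bounded for every standard multi-index ν, and (ii) |a_ν|^{1/|ν|} is infinitesimal for every ν with |ν| infinite and |ν| ≤ d, then |P| := Σ |a_ν| X^ν maps bounded points of *ℂⁿ to bounded points of *ℂ. -/

import Mathlib

open Filter

/-- A sequence representing a point of `*ℂ` is *bounded* if its absolute value is
`𝒰`-a.e. at most some standard natural number. -/
def BddSeq (𝒰 : Ultrafilter ℕ) (x : ℕ → ℂ) : Prop :=
  ∃ m : ℕ, ∀ᶠ i in (𝒰 : Filter ℕ), ‖x i‖ ≤ (m : ℝ)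

private lemma aux_geom_half_le (B : ℕ) : ∑ j ∈ Finset.range B, (2⁻¹:ℝ)^j ≤ 2 := by
  rw [geom_sum_eq (by norm_num), show ((2:ℝ)⁻¹ - 1) = -2⁻¹ by norm_num,
    div_le_iff_of_neg (by norm_num)]
  have : (0:ℝ) ≤ 2⁻¹^B := by positivity
  linarith

private lemma aux_deg_eq {n : ℕ} (ν : Fin n →₀ ℕ) :
    (ν.sum fun _ e => e) = ∑ k : Fin n, ν k :=
  Finsupp.sum_fintype _ _ (fun _ => rfl)

private lemma aux_coord_le_deg {n : ℕ} (ν : Fin n →₀ ℕ) (k : Fin n) :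
    ν k ≤ (ν.sum fun _ e => e) := by
  rw [aux_deg_eq]
  exact Finset.single_le_sum (fun _ _ => Nat.zero_le _) (Finset.mem_univ k)

private lemma aux_sum_prod_half_le {n : ℕ} (S : Finset (Fin n →₀ ℕ)) :
    ∑ ν ∈ S, ∏ k : Fin n, (2⁻¹:ℝ)^(ν k) ≤ 2^n := by
  classical
  set B := S.sup (fun ν => ν.sum fun _ e => e) with hB
  have hsub : S ⊆ (Fintype.piFinset (fun _ : Fin n => Finset.range (B+1))).image
      (fun f => Finsupp.equivFunOnFinite.symm f) := by
    intro ν hν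
    refine Finset.mem_image.2 ⟨fun k => ν k, ?_, by simp⟩
    refine Fintype.mem_piFinset.2 fun k => Finset.mem_range.2 ?_
    exact Nat.lt_succ_of_le ((aux_coord_le_deg ν k).trans
      (Finset.le_sup (f := fun ν => ν.sum fun _ e => e) hν))
  calc ∑ ν ∈ S, ∏ k : Fin n, (2⁻¹:ℝ)^(ν k)
      ≤ ∑ ν ∈ (Fintype.piFinset (fun _ : Fin n => Finset.range (B+1))).image
          (fun f => Finsupp.equivFunOnFinite.symm f), ∏ k : Fin n, (2⁻¹:ℝ)^(ν k) :=
        Finset.sum_le_sum_of_subset_of_nonneg hsub (fun _ _ _ => by positivity)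
    _ = ∑ f ∈ Fintype.piFinset (fun _ : Fin n => Finset.range (B+1)),
          ∏ k : Fin n, (2⁻¹:ℝ)^(f k) := by
        rw [Finset.sum_image (fun a _ b _ h => Finsupp.equivFunOnFinite.symm.injective h)]
        simp
    _ = ∏ k : Fin n, ∑ j ∈ Finset.range (B+1), (2⁻¹:ℝ)^j := (Finset.prod_univ_sum _ _).symm
    _ ≤ ∏ _k : Fin n, (2:ℝ) :=
        Finset.prod_le_prod (fun _ _ => by positivity) (fun _ _ => aux_geom_half_le _)
    _ = 2^n := by simp

private lemma aux_key_claim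
    (𝒰 : Ultrafilter ℕ) (n : ℕ) (d : ℕ → ℕ)
    (p : ℕ → MvPolynomial (Fin n) ℂ)
    (hdeg : ∀ᶠ i in (𝒰 : Filter ℕ), (p i).totalDegree ≤ d i)
    (hinfdeg : ∀ ν : ℕ → (Fin n →₀ ℕ),
      (∀ m : ℕ, ∀ᶠ i in (𝒰 : Filter ℕ), m < ((ν i).sum fun _ e => e)) →
      (∀ᶠ i in (𝒰 : Filter ℕ), ((ν i).sum fun _ e => e) ≤ d i) →
      ∀ ε : ℝ, 0 < ε → ∀ᶠ i in (𝒰 : Filter ℕ),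
        (‖(p i).coeff (ν i)‖) ^ ((1 : ℝ) / ((ν i).sum fun _ e => e)) ≤ ε)
    (M : ℕ) (hM1 : 1 ≤ M) :
    ∃ D : ℕ, ∀ᶠ i in (𝒰 : Filter ℕ), ∀ ν ∈ (p i).support,
      D < (ν.sum fun _ e => e) →
      ‖(p i).coeff ν‖ ≤ ((2*(M:ℝ))⁻¹) ^ (ν.sum fun _ e => e) := by
  classical
  have hMpos : (0:ℝ) < 2*(M:ℝ) := by
    have : (1:ℝ) ≤ (M:ℝ) := by exact_mod_cast hM1
    linarith
  by_contra hcon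
  push_neg at hcon
  have hcon' : ∀ D : ℕ, ∀ᶠ i in (𝒰 : Filter ℕ), ∃ ν ∈ (p i).support,
      D < (ν.sum fun _ e => e) ∧
      ((2*(M:ℝ))⁻¹) ^ (ν.sum fun _ e => e) < ‖(p i).coeff ν‖ := by
    intro D
    exact hcon D
  set B : ℕ → Finset (Fin n →₀ ℕ) := fun i =>
    (p i).support.filter (fun ν =>
      ((2*(M:ℝ))⁻¹) ^ (ν.sum fun _ e => e) < ‖(p i).coeff ν‖) with hB
  set ν' : ℕ → (Fin n →₀ ℕ) := fun i =>
    if h : (B i).Nonempty then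
      (Finset.exists_mem_eq_sup (B i) h (fun ν => ν.sum fun _ e => e)).choose
    else 0 with hν'
  have hν'spec : ∀ i, (B i).Nonempty → ν' i ∈ B i ∧
      (B i).sup (fun ν => ν.sum fun _ e => e) = ((ν' i).sum fun _ e => e) := by
    intro i h
    have := (Finset.exists_mem_eq_sup (B i) h (fun ν => ν.sum fun _ e => e)).choose_spec
    simpa [hν', dif_pos h] using this
  have hNe : ∀ D : ℕ, ∀ᶠ i in (𝒰 : Filter ℕ),
      (B i).Nonempty ∧ D < ((ν' i).sum fun _ e => e) := by
    intro D
    filter_upwards [hcon' D] with i hi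
    obtain ⟨ν, hmem, hD, hlt⟩ := hi
    have hνB : ν ∈ B i := Finset.mem_filter.2 ⟨hmem, hlt⟩
    have hne : (B i).Nonempty := ⟨ν, hνB⟩
    refine ⟨hne, ?_⟩
    have := Finset.le_sup (f := fun ν => ν.sum fun _ e => e) hνB
    rw [(hν'spec i hne).2] at this
    exact hD.trans_le this
  have h1 : ∀ m : ℕ, ∀ᶠ i in (𝒰 : Filter ℕ), m < ((ν' i).sum fun _ e => e) :=
    fun m => (hNe m).mono fun i hi => hi.2
  have h2 : ∀ᶠ i in (𝒰 : Filter ℕ), ((ν' i).sum fun _ e => e) ≤ d i := by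
    filter_upwards [hNe 0, hdeg] with i hi hd
    have hmem : ν' i ∈ (p i).support := (Finset.mem_filter.1 (hν'spec i hi.1).1).1
    exact (MvPolynomial.le_totalDegree hmem).trans hd
  have hε : (0:ℝ) < (2*(M:ℝ)+1)⁻¹ := by positivity
  have h3 := hinfdeg ν' h1 h2 _ hε
  have h4 : ∀ᶠ i in (𝒰 : Filter ℕ), False := by
    filter_upwards [hNe 0, h3] with i hi hr
    obtain ⟨hne, hdegpos⟩ := hi
    have hbad := (Finset.mem_filter.1 (hν'spec i hne).1).2
    set e := ((ν' i).sum fun _ e => e) with he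
    set x := ‖(p i).coeff (ν' i)‖ with hx
    have hcmp : (2*(M:ℝ))⁻¹ < x ^ ((1:ℝ)/e) := by
      have h2' := Real.rpow_lt_rpow (by positivity) hbad (by positivity : 0 < (1:ℝ)/e)
      rwa [← Real.rpow_natCast ((2*(M:ℝ))⁻¹) e, ← Real.rpow_mul (by positivity), mul_one_div,
        div_self (by exact_mod_cast hdegpos.ne' : (e:ℝ) ≠ 0), Real.rpow_one] at h2'
    have hlt2 : (2*(M:ℝ))⁻¹ < (2*(M:ℝ)+1)⁻¹ := lt_of_lt_of_le hcmp hr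
    have := (inv_lt_inv₀ hMpos (by positivity)).1 hlt2
    linarith
  exact absurd (h4.exists) (by simp)

/-- **Sufficient coefficient condition for absolute boundedness (Proposition 1.4.2).**
Let `P = Σ_{|ν| ≤ d} a_ν X^ν = [p i]` be an internal polynomial in `n` variables over
`*ℂ`, of internal degree at most the hypernatural `d = [d i]`.  Assume
(i) `a_ν` is bounded for every standard multi-index `ν`, and
(ii) `|a_ν|^(1/|ν|)` is infinitesimal for every internal multi-index `ν = [ν i]`
with `|ν|` infinite and `|ν| ≤ d`.
Then `|P| = Σ |a_ν| X^ν` maps every bounded point of `*ℂⁿ` to a bounded point of `*ℂ`. -/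
theorem abs_internal_polynomial_bounded_of_coeffs
    (𝒰 : Ultrafilter ℕ) (h𝒰 : ∀ a : ℕ, 𝒰 ≠ pure a) (n : ℕ) (d : ℕ → ℕ)
    (p : ℕ → MvPolynomial (Fin n) ℂ)
    (hdeg : ∀ᶠ i in (𝒰 : Filter ℕ), (p i).totalDegree ≤ d i)
    (hstd : ∀ ν : Fin n →₀ ℕ, BddSeq 𝒰 fun i => (p i).coeff ν)
    (hinfdeg : ∀ ν : ℕ → (Fin n →₀ ℕ),
      (∀ m : ℕ, ∀ᶠ i in (𝒰 : Filter ℕ), m < ((ν i).sum fun _ e => e)) →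
      (∀ᶠ i in (𝒰 : Filter ℕ), ((ν i).sum fun _ e => e) ≤ d i) →
      ∀ ε : ℝ, 0 < ε → ∀ᶠ i in (𝒰 : Filter ℕ),
        (‖(p i).coeff (ν i)‖) ^ ((1 : ℝ) / ((ν i).sum fun _ e => e)) ≤ ε) :
    ∀ z : Fin n → ℕ → ℂ, (∀ k, BddSeq 𝒰 (z k)) →
      ∃ m : ℕ, ∀ᶠ i in (𝒰 : Filter ℕ),
        (∑ ν ∈ (p i).support,
          ‖(p i).coeff ν‖ * ∏ k : Fin n, ‖z k i‖ ^ (ν k)) ≤ (m : ℝ) := by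
  classical
  intro z hz
  choose mz hmz using hz
  set M : ℕ := Finset.univ.sup mz + 1 with hMdef
  have hM1 : 1 ≤ M := Nat.le_add_left 1 _
  have hM1R : (1:ℝ) ≤ (M:ℝ) := by exact_mod_cast hM1
  have hMz : ∀ᶠ i in (𝒰 : Filter ℕ), ∀ k, ‖z k i‖ ≤ (M:ℝ) := by
    rw [eventually_all]
    intro k
    filter_upwards [hmz k] with i hi
    refine hi.trans ?_
    exact_mod_cast Nat.le_succ_of_le (Finset.le_sup (f := mz) (Finset.mem_univ k))
  obtain ⟨D, hkey⟩ := aux_key_claim 𝒰 n d p hdeg hinfdeg M hM1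
  -- standard coefficient bounds for low degrees
  set E : (Fin n → Fin (D+1)) → (Fin n →₀ ℕ) := fun f =>
    Finsupp.equivFunOnFinite.symm (fun k => (f k : ℕ)) with hE
  choose c hc using fun f => hstd (E f)
  set mS : ℕ := Finset.univ.sup c with hmS
  have hEstd : ∀ᶠ i in (𝒰 : Filter ℕ), ∀ f : Fin n → Fin (D+1),
      ‖(p i).coeff (E f)‖ ≤ (mS : ℝ) := by
    rw [eventually_all]
    intro f
    filter_upwards [hc f] with i hi
    refine hi.trans ?_
    exact_mod_cast Finset.le_sup (f := c) (Finset.mem_univ f)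
  refine ⟨(D+1)^n * mS * M^D + 2^n, ?_⟩
  filter_upwards [hMz, hkey, hEstd] with i hMzi hkeyi hEstdi
  set t : (Fin n →₀ ℕ) → ℝ := fun ν =>
    ‖(p i).coeff ν‖ * ∏ k : Fin n, ‖z k i‖ ^ (ν k) with ht
  have hprodM : ∀ ν : Fin n →₀ ℕ,
      (∏ k : Fin n, ‖z k i‖ ^ (ν k)) ≤ (M:ℝ) ^ (ν.sum fun _ e => e) := by
    intro ν
    calc ∏ k : Fin n, ‖z k i‖ ^ (ν k)
        ≤ ∏ k : Fin n, (M:ℝ) ^ (ν k) :=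
          Finset.prod_le_prod (fun k _ => by positivity)
            (fun k _ => pow_le_pow_left₀ (norm_nonneg _) (hMzi k) _)
      _ = (M:ℝ) ^ (∑ k : Fin n, ν k) := Finset.prod_pow_eq_pow_sum _ _ _
      _ = (M:ℝ) ^ (ν.sum fun _ e => e) := by rw [aux_deg_eq]
  rw [← Finset.sum_filter_add_sum_filter_not (p i).support
    (fun ν => (ν.sum fun _ e => e) ≤ D)]
  have hlow : ∑ ν ∈ (p i).support.filter (fun ν => (ν.sum fun _ e => e) ≤ D), t ν
      ≤ ((D+1)^n * mS * M^D : ℕ) := by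
    have hterm : ∀ ν ∈ (p i).support.filter (fun ν => (ν.sum fun _ e => e) ≤ D),
        t ν ≤ (mS : ℝ) * (M:ℝ)^D := by
      intro ν hν
      obtain ⟨hνs, hνd⟩ := Finset.mem_filter.1 hν
      have hcoordD : ∀ k, ν k < D + 1 := fun k =>
        Nat.lt_succ_of_le ((aux_coord_le_deg ν k).trans hνd)
      have hνE : ν = E (fun k => ⟨ν k, hcoordD k⟩) := by
        ext k
        simp [hE]
      have hcoeff : ‖(p i).coeff ν‖ ≤ (mS : ℝ) := by
        rw [hνE]; exact hEstdi _
      have hprod : (∏ k : Fin n, ‖z k i‖ ^ (ν k)) ≤ (M:ℝ)^D :=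
        (hprodM ν).trans (pow_le_pow_right₀ hM1R hνd)
      exact mul_le_mul hcoeff hprod (by positivity) (by positivity)
    have hcard : ((p i).support.filter (fun ν => (ν.sum fun _ e => e) ≤ D)).card
        ≤ (D+1)^n := by
      have : ((p i).support.filter (fun ν => (ν.sum fun _ e => e) ≤ D)).card
          ≤ (Finset.univ : Finset (Fin n → Fin (D+1))).card := by
        refine Finset.card_le_card_of_injOn
          (fun ν k => (⟨ν k % (D+1), Nat.mod_lt _ (Nat.succ_pos D)⟩ : Fin (D+1)))
          (fun _ _ => Finset.mem_univ _) ?_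
        intro a ha b hb hab
        have ha' := Finset.mem_filter.1 (Finset.mem_coe.1 ha)
        have hb' := Finset.mem_filter.1 (Finset.mem_coe.1 hb)
        ext k
        have hcong := congrFun hab k
        simp only [Fin.mk.injEq] at hcong
        rwa [Nat.mod_eq_of_lt (Nat.lt_succ_of_le ((aux_coord_le_deg a k).trans ha'.2)),
          Nat.mod_eq_of_lt (Nat.lt_succ_of_le ((aux_coord_le_deg b k).trans hb'.2))] at hcong
      simpa using this
    calc ∑ ν ∈ (p i).support.filter (fun ν => (ν.sum fun _ e => e) ≤ D), t ν
        ≤ ((p i).support.filter (fun ν => (ν.sum fun _ e => e) ≤ D)).card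
            • ((mS : ℝ) * (M:ℝ)^D) := Finset.sum_le_card_nsmul _ _ _ hterm
      _ ≤ ((D+1)^n : ℕ) • ((mS : ℝ) * (M:ℝ)^D) := by
          refine nsmul_le_nsmul_left (by positivity) hcard
      _ = ((D+1)^n * mS * M^D : ℕ) := by
          push_cast; ring
  have hhigh : ∑ ν ∈ (p i).support.filter (fun ν => ¬ (ν.sum fun _ e => e) ≤ D), t ν
      ≤ ((2:ℝ)^n) := by
    refine le_trans (Finset.sum_le_sum (f := t)
      (g := fun ν => ∏ k : Fin n, (2⁻¹:ℝ)^(ν k)) ?_) (aux_sum_prod_half_le _)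
    intro ν hν
    obtain ⟨hνs, hνd⟩ := Finset.mem_filter.1 hν
    push_neg at hνd
    have hcoeff := hkeyi ν hνs hνd
    have hM0 : (0:ℝ) < (M:ℝ) := by linarith
    calc t ν ≤ ((2*(M:ℝ))⁻¹) ^ (ν.sum fun _ e => e) * (M:ℝ) ^ (ν.sum fun _ e => e) :=
          mul_le_mul hcoeff (hprodM ν) (by positivity) (by positivity)
      _ = (2⁻¹:ℝ) ^ (ν.sum fun _ e => e) := by
          rw [← mul_pow]
          congr 1
          field_simp
      _ = ∏ k : Fin n, (2⁻¹:ℝ)^(ν k) := by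
          rw [Finset.prod_pow_eq_pow_sum, aux_deg_eq]
  calc _ ≤ (((D+1)^n * mS * M^D : ℕ) : ℝ) + (2:ℝ)^n := add_le_add hlow hhigh
    _ = (((D+1)^n * mS * M^D + 2^n : ℕ) : ℝ) := by push_cast; ring
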